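/- Let α, β > 0, T > 0, and let N ∈ ℕ with N ≥ 1. Let φ̂ : ℕ₀ → ℂ satisfy φ̂(n) = 0 for all n ∉ {0, N}. Suppose a : [0,T] × ℕ₀ → ℂ is such that for every n ∈ ℕ₀ the map t ↦ a(t,n) is differentiable on [0,T], a(0,n) = φ̂(n), and ∂_t a(t,n) + i n^α a(t,n) = Σ_{n₁,n₂ ∈ ℕ₀, n₁+n₂=n} a(t,n₁) n₂^β a(t,n₂) for all t ∈ [0,T]. Then: (i) a(t,0) = φ̂(0) for all t ∈ [0,T]; (ii) a(t,n) = 0 for all t ∈ [0,T] and all n with 0 < n < N; and (iii) |a(t,N)| = e^{t N^β Re φ̂(0)} |φ̂(N)| for all t ∈ [0,T]. -/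

import Mathlib

open MeasureTheory

lemma lin_ode {T : ℝ} (c : ℂ) (f : ℝ → ℂ)
    (hf : ∀ t ∈ Set.Icc (0:ℝ) T, HasDerivWithinAt f (c * f t) (Set.Icc (0:ℝ) T) t) :
    ∀ t ∈ Set.Icc (0:ℝ) T, f t = Complex.exp (c * t) * f 0 := by
  intro t ht
  have h0 : (0:ℝ) ∈ Set.Icc (0:ℝ) T := ⟨le_refl _, ht.1.trans ht.2⟩
  have hg : ∀ x ∈ Set.Icc (0:ℝ) T,
      HasDerivWithinAt (fun τ : ℝ => Complex.exp (-c * (τ:ℂ)) * f τ) 0 (Set.Icc (0:ℝ) T) x := by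
    intro x hx
    have h1 : HasDerivAt (fun τ : ℝ => Complex.exp (-c * τ))
        (Complex.exp (-c * x) * (-c)) x := by
      have hid : HasDerivAt (fun τ : ℝ => ((-c) * τ : ℂ)) (-c) x := by
        simpa using (Complex.ofRealCLM.hasDerivAt (x := x)).const_mul (-c)
      simpa using hid.cexp
    have h2 := (h1.hasDerivWithinAt (s := Set.Icc (0:ℝ) T)).mul (hf x hx)
    refine h2.congr_deriv ?_
    ring
  have hbd := Convex.norm_image_sub_le_of_norm_hasDerivWithin_le
    (f := fun τ : ℝ => Complex.exp (-c * (τ:ℂ)) * f τ) (f' := fun _ => (0:ℂ)) (C := 0)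
    hg (fun x _ => by simp) (convex_Icc 0 T) h0 ht
  simp only [zero_mul, norm_le_zero_iff, sub_eq_zero] at hbd
  have heq : Complex.exp (-c * t) * f t = f 0 := by simpa using hbd
  have : Complex.exp (c * t) * (Complex.exp (-c * t) * f t) = Complex.exp (c * t) * f 0 := by
    rw [heq]
  rw [← mul_assoc, ← Complex.exp_add] at this
  simpa using this

/-- For the Fourier-coefficient ODE system of `∂ₜu + iD^α u = u D^β u` on the torus with
initial datum supported on `{0, N}`: the zero mode is constant, the modes `0 < n < N` vanish,
and `|a(t,N)| = e^{t N^β Re φ̂(0)} |φ̂(N)|`.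
Note that Mathlib's real power satisfies `(0:ℝ)^γ = 0` for `γ ≠ 0`,
matching the convention `0^β := 0`. -/
theorem torus_ode_solution_structure (α β T : ℝ) (hα : 0 < α) (hβ : 0 < β) (hT : 0 < T)
    (N : ℕ) (hN : 1 ≤ N) (φh : ℕ → ℂ) (hφh : ∀ n : ℕ, n ≠ 0 → n ≠ N → φh n = 0)
    (a : ℝ → ℕ → ℂ)
    (ha0 : ∀ n : ℕ, a 0 n = φh n)
    (hODE : ∀ n : ℕ, ∀ t ∈ Set.Icc (0 : ℝ) T,
      HasDerivWithinAt (fun τ => a τ n)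
        (-(Complex.I * (((n : ℝ) ^ α : ℝ) : ℂ) * a t n) +
          ∑ p ∈ Finset.HasAntidiagonal.antidiagonal n,
            a t p.1 * (((p.2 : ℝ) ^ β : ℝ) : ℂ) * a t p.2)
        (Set.Icc (0 : ℝ) T) t) :
    (∀ t ∈ Set.Icc (0 : ℝ) T, a t 0 = φh 0) ∧
    (∀ t ∈ Set.Icc (0 : ℝ) T, ∀ n : ℕ, 0 < n → n < N → a t n = 0) ∧
    (∀ t ∈ Set.Icc (0 : ℝ) T,
      ‖a t N‖ = Real.exp (t * (N : ℝ) ^ β * (φh 0).re) * ‖φh N‖) := by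
  -- Part (i): the zero mode is constant.
  have hzero : ∀ t ∈ Set.Icc (0 : ℝ) T, a t 0 = φh 0 := by
    have h : ∀ t ∈ Set.Icc (0 : ℝ) T,
        HasDerivWithinAt (fun τ => a τ 0) ((0:ℂ) * a t 0) (Set.Icc (0:ℝ) T) t := by
      intro t ht
      have := hODE 0 t ht
      simpa [Real.zero_rpow hα.ne', Real.zero_rpow hβ.ne'] using this
    intro t ht
    simpa [ha0 0] using lin_ode 0 (fun τ => a τ 0) h t ht
  -- Key: for `0 < n ≤ N`, if all lower positive modes below `n` vanish, then
  -- `a t n = exp((n^β φh 0 - I n^α) t) * φh n`.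
  have key : ∀ n : ℕ, 0 < n →
      (∀ m : ℕ, 0 < m → m < n → ∀ t ∈ Set.Icc (0:ℝ) T, a t m = 0) →
      ∀ t ∈ Set.Icc (0:ℝ) T,
        a t n = Complex.exp (((((n:ℝ)^β : ℝ) : ℂ) * φh 0 - Complex.I * (((n:ℝ)^α : ℝ) : ℂ)) * t)
          * φh n := by
    intro n hn ih t ht
    have hder : ∀ s ∈ Set.Icc (0:ℝ) T,
        HasDerivWithinAt (fun τ => a τ n)
          (((((n:ℝ)^β : ℝ) : ℂ) * φh 0 - Complex.I * (((n:ℝ)^α : ℝ) : ℂ)) * a s n)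
          (Set.Icc (0:ℝ) T) s := by
      intro s hs
      have h := hODE n s hs
      have hsum : ∑ p ∈ Finset.HasAntidiagonal.antidiagonal n,
          a s p.1 * (((p.2 : ℝ) ^ β : ℝ) : ℂ) * a s p.2
          = φh 0 * (((n:ℝ)^β : ℝ) : ℂ) * a s n := by
        rw [Finset.sum_eq_single_of_mem ((0:ℕ), n)
          (by simp [Finset.mem_antidiagonal])]
        · rw [hzero s hs]
        · rintro ⟨p1, p2⟩ hp hne
          simp only [Finset.HasAntidiagonal.mem_antidiagonal] at hp
          rcases Nat.eq_zero_or_pos p2 with h2 | h2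
          · subst h2; simp [Real.zero_rpow hβ.ne']
          · have hlt : p2 < n := by
              rcases lt_or_eq_of_le (Nat.le.intro (by omega : p2 + p1 = n) : p2 ≤ n) with h | h
              · exact h
              · exfalso; apply hne
                subst h
                simp at hp
                simp [hp]
            rw [ih p2 h2 hlt s hs]
            ring
      rw [hsum] at h
      convert h using 1
      ring
    have h := lin_ode _ (fun τ => a τ n) hder t ht
    rw [h, ha0 n]
  -- Part (ii): modes strictly between 0 and N vanish.
  have hmid : ∀ n : ℕ, n < N → ∀ t ∈ Set.Icc (0:ℝ) T, 0 < n → a t n = 0 := by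
    intro n
    induction n using Nat.strong_induction_on with
    | _ n IH =>
      intro hnN t ht hn
      have := key n hn (fun m hm hmn s hs => IH m hmn (hmn.trans hnN) s hs hm) t ht
      rw [this, hφh n hn.ne' hnN.ne]
      simp
  refine ⟨hzero, fun t ht n hn hnN => hmid n hnN t ht hn, ?_⟩
  -- Part (iii)
  intro t ht
  have hNpos : 0 < N := hN
  have := key N hNpos (fun m hm hmN s hs => hmid m hmN s hs hm) t ht
  rw [this]
  rw [norm_mul, Complex.norm_exp]
  congr 2
  simp [Complex.sub_re, Complex.mul_re, Complex.mul_im]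
  ring
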